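/- The Price of Stability of the min-flowNCG is 1: there exists a Nash equilibrium whose social utility equals the optimal social utility 2k. -/

import Mathlib

open Finset

noncomputable section

/-- Total capacity crossing the cut `(A, Aᶜ)`: each unordered crossing pair
is counted once (for symmetric capacities). -/
def cutCap {V : Type*} [Fintype V] [DecidableEq V] (c : V → V → ℕ) (A : Finset V) : ℕ :=
  ∑ u ∈ A, ∑ v ∈ Aᶜ, c u v

/-- Local edge connectivity between `v` and `w`: the minimum capacity of a cut
separating `v` from `w`. -/
def localConn {V : Type*} [Fintype V] [DecidableEq V] (c : V → V → ℕ) (v w : V) : ℕ :=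
  sInf {m | ∃ A : Finset V, v ∈ A ∧ w ∉ A ∧ cutCap c A = m}

/-- Edge connectivity of the capacitated graph: the minimum capacity of a
nontrivial cut. -/
def edgeConn {V : Type*} [Fintype V] [DecidableEq V] (c : V → V → ℕ) : ℕ :=
  sInf {m | ∃ A : Finset V, A.Nonempty ∧ A ≠ Finset.univ ∧ cutCap c A = m}

/-- Weighted degree of a vertex: sum of capacities of incident edges. -/
def wdeg {V : Type*} [Fintype V] [DecidableEq V] (c : V → V → ℕ) (v : V) : ℕ :=
  ∑ w, c v w

/-- The undirected capacity induced by the bought (directed) capacities `b`. -/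
def cap {V : Type*} (b : V → V → ℕ) : V → V → ℕ := fun u v => b u v + b v u

/-- A strategy profile is feasible for budget `k` if nobody buys a self-loop
and each agent's total bought capacity is at most `k`. -/
def Feasible {V : Type*} [Fintype V] (k : ℕ) (b : V → V → ℕ) : Prop :=
  ∀ v, b v v = 0 ∧ ∑ w, b v w ≤ k

/-- Utility of agent `v` in the min-flowNCG: the lexicographic pair of the
edge connectivity of the network and the number of well-connected nodes. -/
def minUtil {V : Type*} [Fintype V] [DecidableEq V] (b : V → V → ℕ) (v : V) : ℕ × ℕ :=
  (edgeConn (cap b),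
    Set.ncard {w | w ≠ v ∧ edgeConn (cap b) < localConn (cap b) v w})

/-- Nash equilibrium of the min-flowNCG: the profile is feasible and no agent
can strictly lexicographically improve its utility by a unilateral deviation. -/
def MinNE {V : Type*} [Fintype V] [DecidableEq V] (k : ℕ) (b : V → V → ℕ) : Prop :=
  Feasible k b ∧ ∀ (v : V) (s : V → ℕ), s v = 0 → (∑ w, s w) ≤ k →
    ¬ Prod.Lex (· < ·) (· < ·) (minUtil b v) (minUtil (Function.update b v s) v)

/-- Utility of agent `v` in the avg-flowNCG: the average local edge
connectivity (max-flow value) from `v` to every other node. -/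
def avgUtil {V : Type*} [Fintype V] [DecidableEq V] (b : V → V → ℕ) (v : V) : ℚ :=
  (∑ w ∈ Finset.univ.erase v, (localConn (cap b) v w : ℚ)) / ((Fintype.card V : ℚ) - 1)

/-- Nash equilibrium of the avg-flowNCG: the profile is feasible and no agent
can strictly increase its utility by a unilateral deviation. -/
def AvgNE {V : Type*} [Fintype V] [DecidableEq V] (k : ℕ) (b : V → V → ℕ) : Prop :=
  Feasible k b ∧ ∀ (v : V) (s : V → ℕ), s v = 0 → (∑ w, s w) ≤ k →
    avgUtil (Function.update b v s) v ≤ avgUtil b v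

/-- The Price of Stability of the min-flowNCG is 1: every feasible strategy
profile has social utility at most `2k`, and there is a Nash equilibrium whose
social utility equals the optimal social utility `2k`. -/
-- AUX START
lemma cutCap_singleton {V : Type*} [Fintype V] [DecidableEq V] (c : V → V → ℕ) (v : V)
    (h : c v v = 0) : cutCap c {v} = ∑ w, c v w := by
  have h2 := Finset.sum_compl_add_sum {v} (c v)
  rw [Finset.sum_singleton, h, add_zero] at h2
  rw [cutCap, Finset.sum_singleton, h2]

lemma edgeConn_le_cutCap {V : Type*} [Fintype V] [DecidableEq V] (c : V → V → ℕ)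
    (A : Finset V) (h1 : A.Nonempty) (h2 : A ≠ Finset.univ) : edgeConn c ≤ cutCap c A :=
  Nat.sInf_le ⟨A, h1, h2, rfl⟩

lemma localConn_le_cutCap_singleton {V : Type*} [Fintype V] [DecidableEq V] (c : V → V → ℕ)
    (v w : V) (h : w ≠ v) : localConn c v w ≤ cutCap c {v} :=
  Nat.sInf_le ⟨{v}, Finset.mem_singleton_self v, by simpa using h, rfl⟩

lemma singleton_ne_univ {n : ℕ} (hn : 2 ≤ n) (v : Fin n) : ({v} : Finset (Fin n)) ≠ univ := by
  intro h
  have := congrArg Finset.card h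
  simp at this
  omega

/-- Part 1: every feasible profile has edge connectivity at most 2k. -/
lemma feasible_edgeConn_le {n k : ℕ} (hn : 2 ≤ n) (b : Fin n → Fin n → ℕ)
    (hb : Feasible k b) : edgeConn (cap b) ≤ 2 * k := by
  have htot : ∑ v, ∑ w, cap b v w ≤ 2 * (n * k) := by
    have h1 : ∑ v : Fin n, ∑ w, b v w ≤ n * k := by
      calc ∑ v : Fin n, ∑ w, b v w ≤ ∑ _v : Fin n, k :=
            Finset.sum_le_sum fun v _ => (hb v).2
        _ = n * k := by simp [mul_comm]
    have h2 : ∑ v : Fin n, ∑ w, b w v = ∑ v : Fin n, ∑ w, b v w := Finset.sum_comm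
    calc ∑ v, ∑ w, cap b v w = ∑ v : Fin n, (∑ w, b v w + ∑ w, b w v) := by
          simp [cap, Finset.sum_add_distrib]
      _ = ∑ v : Fin n, ∑ w, b v w + ∑ v : Fin n, ∑ w, b w v := Finset.sum_add_distrib
      _ ≤ 2 * (n * k) := by rw [h2]; omega
  have hex : ∃ v : Fin n, ∑ w, cap b v w ≤ 2 * k := by
    by_contra h
    push_neg at h
    have hle : n * (2 * k + 1) ≤ ∑ v, ∑ w, cap b v w := by
      calc n * (2 * k + 1) = ∑ _v : Fin n, (2 * k + 1) := by simp [mul_comm]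
        _ ≤ ∑ v, ∑ w, cap b v w := Finset.sum_le_sum fun v _ => h v
    have hcard : n * (2 * k + 1) = 2 * (n * k) + n := by ring
    omega
  obtain ⟨v, hv⟩ := hex
  have h1 := edgeConn_le_cutCap (cap b) {v} ⟨v, Finset.mem_singleton_self v⟩
    (singleton_ne_univ hn v)
  rw [cutCap_singleton _ _ (by simp [cap, (hb v).1])] at h1
  omega

open Fin.CommRing in
lemma exists_succ_crossing {n : ℕ} [NeZero n] (A : Finset (Fin n)) (hne : A.Nonempty)
    (hA : A ≠ univ) : ∃ u ∈ A, u + 1 ∉ A := by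
  by_contra h
  push_neg at h
  obtain ⟨a, ha⟩ := hne
  have key : ∀ m : ℕ, a + (m : Fin n) ∈ A := by
    intro m
    induction m with
    | zero => simpa using ha
    | succ m ih =>
      have he : a + ((m + 1 : ℕ) : Fin n) = (a + (m : Fin n)) + 1 := by push_cast; ring
      rw [he]; exact h _ ih
  apply hA
  ext x
  simp only [Finset.mem_univ, iff_true]
  have := key (x - a).val
  rwa [Fin.cast_val_eq_self, show a + (x - a) = x from by ring] at this

open Fin.CommRing in
lemma two_ne_zero_fin {n : ℕ} [NeZero n] (hn : 3 ≤ n) : (2 : Fin n) ≠ 0 := by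
  intro h
  have h' : ((2 : ℕ) : Fin n) = 0 := by exact_mod_cast h
  rw [Fin.natCast_eq_zero] at h'
  have := Nat.le_of_dvd (by norm_num) h'
  omega
-- AUX END

open Fin.CommRing in
lemma one_ne_zero_fin {n : ℕ} [NeZero n] (hn : 3 ≤ n) : (1 : Fin n) ≠ 0 := by
  intro h
  have h' : ((1 : ℕ) : Fin n) = 0 := by exact_mod_cast h
  rw [Fin.natCast_eq_zero] at h'
  have := Nat.le_of_dvd (by norm_num) h'
  omega

/-- The directed cycle profile: each agent buys capacity `k` to its successor. -/
def bcyc (n k : ℕ) [NeZero n] : Fin n → Fin n → ℕ := fun v w => if w = v + 1 then k else 0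

lemma bcyc_row {n k : ℕ} [NeZero n] (v : Fin n) : ∑ w, bcyc n k v w = k := by
  simp [bcyc]

open Fin.CommRing in
lemma bcyc_col {n k : ℕ} [NeZero n] (v : Fin n) : ∑ w, bcyc n k w v = k := by
  unfold bcyc
  have h : ∀ w : Fin n, (v = w + 1) = (w = v - 1) := by
    intro w
    simp only [eq_iff_iff]
    constructor <;> intro h <;> subst h <;> ring
  simp_rw [h]
  simp

lemma fin_succ_ne_self {n : ℕ} [NeZero n] (hn : 3 ≤ n) (u : Fin n) : u + 1 ≠ u := by
  intro h
  refine one_ne_zero_fin hn ?_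
  have h' : u + 1 = u + 0 := by rw [add_zero, h]
  exact add_left_cancel h'

open Fin.CommRing in
lemma fin_succ_succ_ne_self {n : ℕ} [NeZero n] (hn : 3 ≤ n) (u : Fin n) : u + 1 + 1 ≠ u := by
  intro h
  refine two_ne_zero_fin hn ?_
  have h2 : u + 2 = u + 1 + 1 := by ring
  have h' : u + 2 = u + 0 := by rw [add_zero, h2, h]
  exact add_left_cancel h'

lemma bcyc_feasible {n k : ℕ} [NeZero n] (hn : 3 ≤ n) : Feasible k (bcyc n k) := by
  intro v
  constructor
  · simp only [bcyc, ite_eq_right_iff]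
    intro h
    exact absurd h.symm (fin_succ_ne_self hn v)
  · rw [bcyc_row]

lemma bcyc_self {n k : ℕ} [NeZero n] (hn : 3 ≤ n) (u : Fin n) : bcyc n k u u = 0 :=
  (bcyc_feasible hn u).1

lemma bcyc_succ_pred {n k : ℕ} [NeZero n] (hn : 3 ≤ n) (u : Fin n) :
    bcyc n k (u + 1) u = 0 := by
  simp only [bcyc, ite_eq_right_iff]
  intro h
  exact absurd h.symm (fin_succ_succ_ne_self hn u)

lemma cap_bcyc_succ {n k : ℕ} [NeZero n] (hn : 3 ≤ n) (u : Fin n) :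
    cap (bcyc n k) u (u + 1) = k := by
  have h1 : bcyc n k u (u + 1) = k := by simp [bcyc]
  simp [cap, h1, bcyc_succ_pred hn u]

lemma cap_bcyc_pred {n k : ℕ} [NeZero n] (hn : 3 ≤ n) (u : Fin n) :
    cap (bcyc n k) (u + 1) u = k := by
  have h1 : bcyc n k u (u + 1) = k := by simp [bcyc]
  simp [cap, h1, bcyc_succ_pred hn u]

lemma cutCap_bcyc_ge {n k : ℕ} [NeZero n] (hn : 3 ≤ n) (A : Finset (Fin n))
    (h1 : A.Nonempty) (h2 : A ≠ univ) : 2 * k ≤ cutCap (cap (bcyc n k)) A := by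
  obtain ⟨u, hu, hu1⟩ := exists_succ_crossing A h1 h2
  obtain ⟨u', hu', hu'1⟩ := exists_succ_crossing Aᶜ
    (Finset.nonempty_iff_ne_empty.mpr fun he => h2 (by simpa [Finset.compl_eq_empty_iff] using he))
    (fun he => h1.ne_empty (by rwa [Finset.compl_eq_univ_iff] at he))
  rw [Finset.mem_compl] at hu'
  have hu'1' : u' + 1 ∈ A := by simpa using hu'1
  have hpne : ((u, u + 1) : Fin n × Fin n) ≠ (u' + 1, u') := by
    intro h
    rw [Prod.mk.injEq] at h
    obtain ⟨ha, hb⟩ := h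
    exact fin_succ_succ_ne_self hn u' (by rw [← ha]; exact hb)
  have hsub : ({(u, u + 1), (u' + 1, u')} : Finset (Fin n × Fin n)) ⊆ A ×ˢ Aᶜ := by
    intro p hp
    rw [Finset.mem_insert, Finset.mem_singleton] at hp
    rcases hp with h | h <;> subst h <;> rw [Finset.mem_product] <;>
      simp [hu, hu1, hu', hu'1']
  calc 2 * k = cap (bcyc n k) u (u + 1) + cap (bcyc n k) (u' + 1) u' := by
        rw [cap_bcyc_succ hn, cap_bcyc_pred hn]; ring
    _ = ∑ p ∈ ({(u, u + 1), (u' + 1, u')} : Finset (Fin n × Fin n)),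
          cap (bcyc n k) p.1 p.2 :=
        (Finset.sum_pair (f := fun p : Fin n × Fin n => cap (bcyc n k) p.1 p.2) hpne).symm
    _ ≤ ∑ p ∈ A ×ˢ Aᶜ, cap (bcyc n k) p.1 p.2 :=
        Finset.sum_le_sum_of_subset hsub
    _ = cutCap (cap (bcyc n k)) A := by rw [cutCap, Finset.sum_product]

lemma wdeg_cap_bcyc {n k : ℕ} [NeZero n] (v : Fin n) :
    ∑ w, cap (bcyc n k) v w = 2 * k := by
  calc ∑ w, cap (bcyc n k) v w = ∑ w, bcyc n k v w + ∑ w, bcyc n k w v := by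
        simp [cap, Finset.sum_add_distrib]
    _ = 2 * k := by rw [bcyc_row, bcyc_col]; ring

lemma edgeConn_bcyc {n k : ℕ} [NeZero n] (hn : 3 ≤ n) :
    edgeConn (cap (bcyc n k)) = 2 * k := by
  apply le_antisymm
  · have h1 := edgeConn_le_cutCap (cap (bcyc n k)) {0}
      ⟨0, Finset.mem_singleton_self 0⟩ (singleton_ne_univ (by omega) 0)
    rwa [cutCap_singleton _ _ (by simp [cap, bcyc_self (k := k) hn 0]),
      wdeg_cap_bcyc] at h1
  · rw [edgeConn]
    apply le_csInf
    · exact ⟨cutCap (cap (bcyc n k)) {0},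
        ⟨{0}, ⟨0, Finset.mem_singleton_self 0⟩, singleton_ne_univ (by omega) 0, rfl⟩⟩
    · rintro m ⟨A, h1, h2, rfl⟩
      exact cutCap_bcyc_ge hn A h1 h2

theorem min_flow_PoS_eq_one (n k : ℕ) (hn : 3 ≤ n) (hk1 : 1 ≤ k) (hk : k < n) :
    (∀ b : Fin n → Fin n → ℕ, Feasible k b → edgeConn (cap b) ≤ 2 * k) ∧
    ∃ b : Fin n → Fin n → ℕ, MinNE k b ∧ edgeConn (cap b) = 2 * k := by
  haveI : NeZero n := ⟨by omega⟩
  refine ⟨fun b hb => feasible_edgeConn_le (by omega) b hb,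
    bcyc n k, ⟨bcyc_feasible hn, ?_⟩, edgeConn_bcyc hn⟩
  intro v s hs0 hsk
  set b' := Function.update (bcyc n k) v s with hb'def
  have hb' : Feasible k b' := by
    intro u
    by_cases hu : u = v
    · subst hu
      rw [hb'def]
      simp only [Function.update_self]
      exact ⟨hs0, hsk⟩
    · rw [hb'def, Function.update_of_ne hu]
      exact bcyc_feasible hn u
  have hE' : edgeConn (cap b') ≤ 2 * k := feasible_edgeConn_le (by omega) _ hb'
  have hcut' : cutCap (cap b') {v} ≤ 2 * k := by
    have hvv : cap b' v v = 0 := by simp [cap, hb'def, hs0]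
    rw [cutCap_singleton _ _ hvv]
    have h1 : ∑ w, b' v w ≤ k := by
      rw [hb'def]; simpa using hsk
    have h2 : ∑ w, b' w v ≤ k := by
      calc ∑ w, b' w v ≤ ∑ w, bcyc n k w v := by
            apply Finset.sum_le_sum
            intro w _
            by_cases hw : w = v
            · subst hw; simp [hb'def, hs0]
            · rw [hb'def, Function.update_of_ne hw]
        _ = k := bcyc_col v
    calc ∑ w, cap b' v w = ∑ w, b' v w + ∑ w, b' w v := by
          simp [cap, Finset.sum_add_distrib]
      _ ≤ 2 * k := by omega
  intro hlex
  rw [Prod.lex_def] at hlex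
  simp only [minUtil, Prod.fst, Prod.snd] at hlex
  rcases hlex with h | ⟨h1, h2⟩
  · rw [edgeConn_bcyc hn] at h
    omega
  · have hE'eq : edgeConn (cap b') = 2 * k := by
      rw [← h1, edgeConn_bcyc hn]
    have hempty : {w | w ≠ v ∧ edgeConn (cap b') < localConn (cap b') v w} = ∅ := by
      ext w
      simp only [Set.mem_setOf_eq, Set.mem_empty_iff_false, iff_false, not_and]
      intro hwv hlt
      have := localConn_le_cutCap_singleton (cap b') v w hwv
      omega
    rw [hempty] at h2
    simp at h2
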